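/- The Cartesian product of the canopy tree with Z has exactly one end. -/

import Mathlib

open MeasureTheory

/-- The subgraph of `G` spanned by open vertices in configuration `ω`. -/
def percSubgraph {V : Type*} (G : SimpleGraph V) (ω : V → Bool) : SimpleGraph V where
  Adj a b := G.Adj a b ∧ ω a = true ∧ ω b = true
  symm := ⟨fun a b ⟨h, ha, hb⟩ => ⟨h.symm, hb, ha⟩⟩
  loopless := ⟨fun a ⟨h, _, _⟩ => G.irrefl h⟩

/-- The open cluster of `v`: vertices reachable from `v` in the open subgraph
(empty if `v` is closed). -/
def openCluster {V : Type*} (G : SimpleGraph V) (ω : V → Bool) (v : V) : Set V :=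
  {w | ω v = true ∧ (percSubgraph G ω).Reachable v w}

/-- `μ` is Bernoulli(p) site percolation: cylinder events have product probabilities. -/
def IsBernoulli {V : Type*} (μ : Measure (V → Bool)) (p : ℝ) : Prop :=
  ∀ (S : Finset V) (g : V → Bool),
    μ {ω | ∀ v ∈ S, ω v = g v} = ∏ v ∈ S, ENNReal.ofReal (if g v = true then p else 1 - p)

/-- Vertices of the canopy tree: at level `n`, the binary tree of depth `n`
(vertices = binary strings of length ≤ n) attached at the ray vertex `⟨n, []⟩`. -/
abbrev CanopyV : Type := Σ n : ℕ, {l : List Bool // l.length ≤ n}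

/-- The canopy tree: the infinite ray `v_n = ⟨n, []⟩`, with a complete binary
tree of depth `n` rooted at `v_n`. -/
def canopyTree : SimpleGraph CanopyV where
  Adj a b :=
    (a.1 = b.1 ∧ ∃ x, b.2.val = a.2.val ++ [x] ∨ a.2.val = b.2.val ++ [x])
    ∨ (a.2.val = [] ∧ b.2.val = [] ∧ (a.1 = b.1 + 1 ∨ b.1 = a.1 + 1))
  symm := by
    constructor
    rintro a b (⟨h1, x, h2⟩ | ⟨h1, h2, h3⟩)
    · exact Or.inl ⟨h1.symm, x, h2.symm⟩
    · exact Or.inr ⟨h2, h1, h3.symm⟩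
  loopless := by
    constructor
    rintro a (⟨_, x, h | h⟩ | ⟨_, _, h | h⟩) <;> first | simp at h | omega

/-- The Cartesian product of a graph with the bi-infinite line `ℤ`. -/
def prodZ {V : Type*} (G : SimpleGraph V) : SimpleGraph (V × ℤ) where
  Adj a b := (a.1 = b.1 ∧ (a.2 = b.2 + 1 ∨ b.2 = a.2 + 1)) ∨ (G.Adj a.1 b.1 ∧ a.2 = b.2)
  symm := by
    constructor
    rintro a b (⟨h1, h2⟩ | ⟨h1, h2⟩)
    · exact Or.inl ⟨h1.symm, h2.symm⟩
    · exact Or.inr ⟨h1.symm, h2.symm⟩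
  loopless := by
    constructor
    rintro a (⟨_, h | h⟩ | ⟨h, _⟩)
    · omega
    · omega
    · exact G.irrefl h

namespace CanopyAux

open SimpleGraph

abbrev V' : Type := CanopyV × ℤ
abbrev G : SimpleGraph V' := prodZ canopyTree

/-- The ray vertex at level `n`. -/
def rayV (n : ℕ) : CanopyV := ⟨n, ⟨[], by simp⟩⟩

/-- The region outside the `(N, M)` box. -/
def Out (N M : ℕ) : Set V' := {x | N < x.1.1 ∨ M < x.2.natAbs}

/-- The anchor vertex, outside the `(N, M)` box. -/
def anch (N M : ℕ) : V' := (rayV (N + 1), (M : ℤ) + 1)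

lemma anch_mem (N M : ℕ) : anch N M ∈ Out N M := Or.inl (by simp [anch, rayV])

lemma reach_mono {W : Type*} {H : SimpleGraph W} {s t : Set W} (h : s ⊆ t)
    {a b : W} (ha : a ∈ s) (hb : b ∈ s)
    (hr : (H.induce s).Reachable ⟨a, ha⟩ ⟨b, hb⟩) :
    (H.induce t).Reachable ⟨a, h ha⟩ ⟨b, h hb⟩ :=
  hr.map (induceHom SimpleGraph.Hom.id (fun _ hx => h hx))

lemma reachZ (s : Set V') (v : CanopyV) (hs : ∀ m : ℤ, (v, m) ∈ s) (m m' : ℤ) :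
    (G.induce s).Reachable ⟨(v, m), hs m⟩ ⟨(v, m'), hs m'⟩ := by
  have key : ∀ (k : ℕ) (a b : ℤ), b = a + k →
      (G.induce s).Reachable ⟨(v, a), hs a⟩ ⟨(v, b), hs b⟩ := by
    intro k
    induction k with
    | zero =>
      intro a b h
      have : b = a := by omega
      subst this
      exact Reachable.refl _
    | succ k ih =>
      intro a b h
      have h1 := ih a (a + k) rfl
      have hadj : (prodZ canopyTree).Adj (v, a + k) (v, b) :=
        Or.inl ⟨rfl, Or.inr (by omega)⟩
      have h2 : (G.induce s).Adj ⟨(v, a + k), hs _⟩ ⟨(v, b), hs _⟩ := hadj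
      exact h1.trans h2.reachable
  rcases le_total m m' with h | h
  · exact key (m' - m).toNat m m' (by omega)
  · exact (key (m - m').toNat m' m (by omega)).symm

lemma reachRay (s : Set V') (m : ℤ) (hs : ∀ n : ℕ, (rayV n, m) ∈ s) (n n' : ℕ) :
    (G.induce s).Reachable ⟨(rayV n, m), hs n⟩ ⟨(rayV n', m), hs n'⟩ := by
  have key : ∀ (k a b : ℕ), b = a + k →
      (G.induce s).Reachable ⟨(rayV a, m), hs a⟩ ⟨(rayV b, m), hs b⟩ := by
    intro k
    induction k with
    | zero =>
      intro a b h
      have : b = a := by omega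
      subst this
      exact Reachable.refl _
    | succ k ih =>
      intro a b h
      have h1 := ih a (a + k) rfl
      have hadj : (prodZ canopyTree).Adj (rayV (a + k), m) (rayV b, m) :=
        Or.inr ⟨Or.inr ⟨rfl, rfl, Or.inr (show (rayV b).1 = (rayV (a+k)).1 + 1 by simp [rayV]; omega)⟩, rfl⟩
      have h2 : (G.induce s).Adj ⟨(rayV (a + k), m), hs _⟩ ⟨(rayV b, m), hs _⟩ := hadj
      exact h1.trans h2.reachable
  rcases le_total n n' with h | h
  · exact key (n' - n) n n' (by omega)
  · exact (key (n - n') n' n (by omega)).symm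

lemma reachStrip (s : Set V') (n : ℕ) (m : ℤ)
    (hs : ∀ (l : List Bool) (h : l.length ≤ n), ((⟨n, ⟨l, h⟩⟩ : CanopyV), m) ∈ s) :
    ∀ (l : List Bool) (hl : l.length ≤ n),
      (G.induce s).Reachable ⟨((⟨n, ⟨l, hl⟩⟩ : CanopyV), m), hs l hl⟩
        ⟨(rayV n, m), hs [] (by simp)⟩ := by
  intro l
  induction l using List.reverseRecOn with
  | nil => intro hl; exact Reachable.refl _
  | append_singleton l b ih =>
    intro hl
    have hl' : l.length ≤ n := by simp at hl; omega
    have h2 : (G.induce s).Adj ⟨((⟨n, ⟨l ++ [b], hl⟩⟩ : CanopyV), m), hs _ _⟩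
        ⟨((⟨n, ⟨l, hl'⟩⟩ : CanopyV), m), hs _ _⟩ :=
      (Or.inr ⟨Or.inl ⟨rfl, ⟨b, Or.inr rfl⟩⟩, rfl⟩ :
        (prodZ canopyTree).Adj ((⟨n, ⟨l ++ [b], hl⟩⟩ : CanopyV), m) ((⟨n, ⟨l, hl'⟩⟩ : CanopyV), m))
    exact h2.reachable.trans (ih hl')

lemma reach_out (N M : ℕ) : ∀ (x : V') (hx : x ∈ Out N M),
    (G.induce (Out N M)).Reachable ⟨x, hx⟩ ⟨anch N M, anch_mem N M⟩ := by
  rintro ⟨⟨n, l, hl⟩, m⟩ hx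
  have hM1 : ((M : ℤ) + 1).natAbs = M + 1 := by omega
  rcases hx with hn | hm
  · -- n > N
    have hsl : ∀ (l : List Bool) (h : l.length ≤ n), ((⟨n, ⟨l, h⟩⟩ : CanopyV), m) ∈ Out N M :=
      fun _ _ => Or.inl hn
    have s1 := reachStrip (Out N M) n m hsl l hl
    have hsz : ∀ m' : ℤ, ((rayV n : CanopyV), m') ∈ Out N M := fun _ => Or.inl hn
    have s2 := reachZ (Out N M) (rayV n) hsz m ((M : ℤ) + 1)
    have hsr : ∀ n' : ℕ, ((rayV n' : CanopyV), (M : ℤ) + 1) ∈ Out N M :=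
      fun _ => Or.inr (by omega)
    have s3 := reachRay (Out N M) ((M : ℤ) + 1) hsr n (N + 1)
    exact (s1.trans s2).trans s3
  · -- |m| > M
    have hsl : ∀ (l : List Bool) (h : l.length ≤ n), ((⟨n, ⟨l, h⟩⟩ : CanopyV), m) ∈ Out N M :=
      fun _ _ => Or.inr hm
    have s1 := reachStrip (Out N M) n m hsl l hl
    have hsr : ∀ n' : ℕ, ((rayV n' : CanopyV), m) ∈ Out N M := fun _ => Or.inr hm
    have s2 := reachRay (Out N M) m hsr n (N + 1)
    have hsz : ∀ m' : ℤ, ((rayV (N + 1) : CanopyV), m') ∈ Out N M :=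
      fun _ => Or.inl (by simp [rayV])
    have s3 := reachZ (Out N M) (rayV (N + 1)) hsz m ((M : ℤ) + 1)
    exact (s1.trans s2).trans s3

/-- Any two points of `Out N M` are connected within `Out N M`, hence within any superset. -/
lemma reach_in_superset {t : Set V'} (N M : ℕ) (hsub : Out N M ⊆ t)
    {x y : V'} (hx : x ∈ Out N M) (hy : y ∈ Out N M) :
    (G.induce t).Reachable ⟨x, hsub hx⟩ ⟨y, hsub hy⟩ :=
  reach_mono hsub hx hy ((reach_out N M x hx).trans (reach_out N M y hy).symm)

/-- The box is finite. -/
lemma box_finite (N M : ℕ) : ((Out N M)ᶜ : Set V').Finite := by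
  have hF : (Set.Iic N ×ˢ ({l : List Bool | l.length ≤ N} ×ˢ
      Set.Icc (-(M : ℤ)) (M : ℤ))).Finite :=
    (Set.finite_Iic N).prod (Set.Finite.prod (List.finite_length_le Bool N) (Set.finite_Icc _ _))
  set g : V' → ℕ × List Bool × ℤ := fun x => (x.1.1, x.1.2.val, x.2) with hg
  have hinj : Function.Injective g := by
    rintro ⟨⟨n, l, hl⟩, m⟩ ⟨⟨n', l', hl'⟩, m'⟩ h
    simp only [hg, Prod.mk.injEq] at h
    obtain ⟨h1, h2, h3⟩ := h
    subst h1; subst h2; subst h3; rfl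
  apply Set.Finite.subset (hF.preimage hinj.injOn)
  rintro ⟨⟨n, l, hl⟩, m⟩ hx
  simp only [Out, Set.mem_compl_iff, Set.mem_setOf_eq, not_or, not_lt] at hx
  refine ⟨by exact hx.1, by exact le_trans hl hx.1, by simp [hg]; omega⟩

/-- The `N` bound from a finite set. -/
def bN (K : Finset V') : ℕ := K.sup fun x => x.1.1
def bM (K : Finset V') : ℕ := K.sup fun x => x.2.natAbs

lemma subset_box (K : Finset V') : (K : Set V') ⊆ (Out (bN K) (bM K))ᶜ := by
  intro x hx
  simp only [Out, Set.mem_compl_iff, Set.mem_setOf_eq, not_or, not_lt]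
  exact ⟨Finset.le_sup (f := fun x : V' => x.1.1) hx,
    Finset.le_sup (f := fun x : V' => x.2.natAbs) hx⟩

lemma out_subset_compl (K : Finset V') : Out (bN K) (bM K) ⊆ ((K : Set V'))ᶜ := by
  intro x hx hxK
  exact absurd hx (subset_box K hxK)

lemma anch_not_mem (K : Finset V') : anch (bN K) (bM K) ∉ (K : Set V') :=
  out_subset_compl K (anch_mem _ _)

end CanopyAux

/-- the Cartesian product of the canopy tree with `ℤ` has exactly one end. -/
theorem canopy_prod_Z_one_end :
    Nonempty (prodZ canopyTree).end ∧ Subsingleton (prodZ canopyTree).end := by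
  classical
  open CanopyAux in
  constructor
  · -- Nonempty: the section sending `K` to the component of the anchor beyond `K`'s box.
    refine ⟨⟨fun K => (prodZ canopyTree).componentComplMk (anch_not_mem K.unop), ?_⟩⟩
    intro K K' f
    simp only [SimpleGraph.componentComplFunctor_map]
    change SimpleGraph.ComponentCompl.hom (by exact_mod_cast CategoryTheory.le_of_op_hom f) ((prodZ canopyTree).componentComplMk _) = _
    rw [SimpleGraph.ComponentCompl.hom_mk]
    apply SimpleGraph.ConnectedComponent.sound
    have hsub : (K'.unop : Set V') ⊆ (K.unop : Set V') := by
      exact_mod_cast CategoryTheory.le_of_op_hom f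
    have hN : bN K'.unop ≤ bN K.unop := Finset.sup_mono hsub
    have hM : bM K'.unop ≤ bM K.unop := Finset.sup_mono hsub
    have h1 : anch (bN K.unop) (bM K.unop) ∈ Out (bN K'.unop) (bM K'.unop) :=
      Or.inl (by simp [anch, rayV]; omega)
    exact reach_in_superset (bN K'.unop) (bM K'.unop) (out_subset_compl K'.unop)
      h1 (anch_mem _ _)
  · -- Subsingleton: complements of boxes are connected.
    constructor
    intro s t
    apply Subtype.ext
    funext K
    set N := bN K.unop with hNdef
    set M := bM K.unop with hMdef
    set L : Finset V' := (box_finite N M).toFinset with hLdef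
    have hLcoe : (L : Set V') = (Out N M)ᶜ := Set.Finite.coe_toFinset _
    have hKL : K.unop ≤ L := by
      intro x hx
      rw [← Finset.mem_coe, hLcoe]
      exact subset_box K.unop hx
    have hsingle : ∀ C D : (prodZ canopyTree).ComponentCompl (L : Set V'), C = D := by
      refine SimpleGraph.ComponentCompl.ind fun x hx => ?_
      refine SimpleGraph.ComponentCompl.ind fun y hy => ?_
      have hx' : x ∈ Out N M := by
        by_contra h
        exact hx (show x ∈ (L : Set V') by rw [hLcoe]; exact h)
      have hy' : y ∈ Out N M := by
        by_contra h
        exact hy (show y ∈ (L : Set V') by rw [hLcoe]; exact h)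
      have hsub : Out N M ⊆ ((L : Set V'))ᶜ := by
        intro z hz hzL
        rw [hLcoe] at hzL; exact hzL hz
      exact SimpleGraph.ConnectedComponent.sound
        (reach_in_superset N M hsub hx' hy')
    have h1 := s.2 (CategoryTheory.opHomOfLE hKL)
    have h2 := t.2 (CategoryTheory.opHomOfLE hKL)
    rw [← h1, ← h2]
    exact congrArg ((prodZ canopyTree).componentComplFunctor.map
      (CategoryTheory.opHomOfLE hKL)) (hsingle _ _)
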